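/- The tent map T is chaotic on [0,1]: T maps [0,1] onto [0,1], is continuous on [0,1], is topologically transitive on [0,1] (with the subspace topology), has a dense set of periodic points in [0,1], and is sensitive to initial conditions on [0,1] (with the standard metric). -/
import Mathlib


/-- The tent map `T : ℝ → ℝ`. -/
noncomputable def tent (x : ℝ) : ℝ := if x ≤ 1 / 2 then 2 * x else 2 * (1 - x)

/-- The tent map maps `[0,1]` into itself. -/
theorem tent_mem {x : ℝ} (hx : x ∈ Set.Icc (0 : ℝ) 1) :
    tent x ∈ Set.Icc (0 : ℝ) 1 := by
  obtain ⟨h0, h1⟩ := hx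
  unfold tent
  split_ifs with h
  · exact ⟨by linarith, by linarith⟩
  · exact ⟨by linarith, by linarith⟩

/-- The tent map restricted to `[0,1]` (with the subspace topology and the
standard metric). -/
noncomputable def tentSub : Set.Icc (0 : ℝ) 1 → Set.Icc (0 : ℝ) 1 :=
  fun x => ⟨tent x, tent_mem x.2⟩

lemma tent_continuous : Continuous tent := by
  unfold tent
  apply Continuous.if_le (by continuity) (by continuity) continuous_id continuous_const
  intro x hx; simp only [id] at hx; rw [hx]; norm_num

lemma tentSub_val (n : ℕ) (x : Set.Icc (0:ℝ) 1) : (tentSub^[n] x : ℝ) = tent^[n] (x:ℝ) := by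
  induction n generalizing x with
  | zero => rfl
  | succ n ih =>
    rw [Function.iterate_succ_apply, Function.iterate_succ_apply]
    exact ih (tentSub x)

/-- dyadic interval containing x -/
lemma dyadic_mem {x : ℝ} (hx : x ∈ Set.Icc (0:ℝ) 1) (n : ℕ) :
    ∃ k : ℕ, k < 2^n ∧ x ∈ Set.Icc ((k:ℝ)/2^n) ((k+1)/2^n) := by
  obtain ⟨h0, h1⟩ := hx
  have h2n : (0:ℝ) < 2^n := by positivity
  by_cases hx1 : x = 1
  · refine ⟨2^n - 1, by have := Nat.one_le_two_pow (n := n); omega, ?_⟩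
    have : ((2^n - 1 : ℕ) : ℝ) = 2^n - 1 := by
      have : (1:ℕ) ≤ 2^n := Nat.one_le_two_pow
      push_cast [this]
      norm_num
    rw [this, hx1]
    constructor
    · rw [div_le_one h2n]; linarith
    · rw [le_div_iff₀ h2n]; linarith
  · have hlt : x < 1 := lt_of_le_of_ne h1 hx1
    refine ⟨Nat.floor (x * 2^n), ?_, ?_, ?_⟩
    · have : x * 2^n < 2^n := by nlinarith
      have := Nat.floor_lt (by positivity : (0:ℝ) ≤ x * 2^n) |>.2 (by exact_mod_cast this)
      exact_mod_cast this
    · rw [div_le_iff₀ h2n]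
      exact Nat.floor_le (by positivity)
    · rw [le_div_iff₀ h2n]
      have := Nat.lt_floor_add_one (x * 2^n)
      linarith
lemma img1 {a b : ℝ} : (fun x : ℝ => 2*x) '' Set.Icc a b = Set.Icc (2*a) (2*b) := by
  ext y; constructor
  · rintro ⟨x, ⟨h1,h2⟩, rfl⟩; constructor <;> dsimp <;> linarith
  · rintro ⟨h1,h2⟩; exact ⟨y/2, ⟨by linarith, by linarith⟩, by dsimp; ring⟩

lemma img2 {a b : ℝ} : (fun x : ℝ => 2*(1-x)) '' Set.Icc a b = Set.Icc (2*(1-b)) (2*(1-a)) := by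
  ext y; constructor
  · rintro ⟨x, ⟨h1,h2⟩, rfl⟩; constructor <;> dsimp <;> linarith
  · rintro ⟨h1,h2⟩; exact ⟨1 - y/2, ⟨by linarith, by linarith⟩, by dsimp; ring⟩

/-- main structural lemma -/
lemma tent_iter_image : ∀ n k : ℕ, k < 2^n →
    tent^[n] '' Set.Icc ((k:ℝ)/2^n) ((k+1)/2^n) = Set.Icc (0:ℝ) 1 := by
  intro n
  induction n with
  | zero =>
    intro k hk
    interval_cases k
    simp
  | succ n ih =>
    intro k hk
    have h2n : (0:ℝ) < 2^n := by positivity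
    have h2n1 : (0:ℝ) < 2^(n+1) := by positivity
    rw [Function.iterate_succ, Set.image_comp]
    by_cases hc : k < 2^n
    · -- interval within [0, 1/2], tent = 2x
      have heq : Set.EqOn tent (fun x : ℝ => 2*x) (Set.Icc ((k:ℝ)/2^(n+1)) ((k+1)/2^(n+1))) := by
        intro x ⟨h1, h2⟩
        have : x ≤ 1/2 := by
          have h3 : ((k:ℝ)+1)/2^(n+1) ≤ 1/2 := by
            rw [div_le_div_iff₀ h2n1 (by norm_num)]
            have h4 : (k:ℝ) + 1 ≤ 2^n := by exact_mod_cast hc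
            have h5 : (2:ℝ)^(n+1) = 2^n * 2 := by ring
            nlinarith
          linarith
        show tent x = 2*x
        rw [tent, if_pos this]
      rw [Set.EqOn.image_eq heq, img1]
      have e1 : 2 * ((k:ℝ)/2^(n+1)) = (k:ℝ)/2^n := by field_simp; ring
      have e2 : 2 * (((k:ℝ)+1)/2^(n+1)) = ((k:ℝ)+1)/2^n := by field_simp; ring
      rw [e1, e2]
      exact ih k hc
    · -- interval within [1/2, 1], tent = 2(1-x)
      push_neg at hc
      have heq : Set.EqOn tent (fun x : ℝ => 2*(1-x)) (Set.Icc ((k:ℝ)/2^(n+1)) ((k+1)/2^(n+1))) := by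
        intro x ⟨h1, h2⟩
        have hx2 : 1/2 ≤ x := by
          have : (1:ℝ)/2 ≤ (k:ℝ)/2^(n+1) := by
            rw [div_le_div_iff₀ (by norm_num) h2n1]
            have h4 : (2:ℝ)^n ≤ k := by exact_mod_cast hc
            have h5 : (2:ℝ)^(n+1) = 2^n * 2 := by ring
            nlinarith
          linarith
        show tent x = 2*(1-x)
        by_cases h : x ≤ 1/2
        · have hx : x = 1/2 := le_antisymm h hx2
          rw [tent, if_pos h, hx]; norm_num
        · rw [tent, if_neg h]
      rw [Set.EqOn.image_eq heq, img2]
      set j : ℕ := 2^(n+1) - 1 - k with hj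
      have hk' : k ≤ 2^(n+1) - 1 := by omega
      have hjr : (j:ℝ) = 2^(n+1) - 1 - k := by
        have : (j:ℕ) + 1 + k = 2^(n+1) := by omega
        have := congrArg (Nat.cast : ℕ → ℝ) this
        push_cast at this
        linarith
      have hjlt : j < 2^n := by
        have h2 : 2^n ≤ k := hc
        have : 2^(n+1) = 2 * 2^n := by ring
        omega
      have e1 : 2 * (1 - ((k:ℝ)+1)/2^(n+1)) = (j:ℝ)/2^n := by
        rw [hjr]; field_simp; ring
      have e2 : 2 * (1 - (k:ℝ)/2^(n+1)) = ((j:ℝ)+1)/2^n := by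
        rw [hjr]; field_simp; ring
      rw [e1, e2]
      exact ih j hjlt

lemma dyadic_subset (n k : ℕ) (hk : k < 2^n) :
    Set.Icc ((k:ℝ)/2^n) ((k+1)/2^n) ⊆ Set.Icc (0:ℝ) 1 := by
  have h2n : (0:ℝ) < 2^n := by positivity
  have hkr : (k:ℝ) + 1 ≤ 2^n := by exact_mod_cast hk
  apply Set.Icc_subset_Icc
  · positivity
  · rw [div_le_one h2n]; linarith

lemma tent_fixed (n k : ℕ) (hk : k < 2^n) :
    ∃ p ∈ Set.Icc ((k:ℝ)/2^n) ((k+1)/2^n), tent^[n] p = p := by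
  have himg := tent_iter_image n k hk
  obtain ⟨a, ha, ha0⟩ : (0:ℝ) ∈ tent^[n] '' _ := himg ▸ (by norm_num : (0:ℝ) ∈ Set.Icc (0:ℝ) 1)
  obtain ⟨b, hb, hb1⟩ : (1:ℝ) ∈ tent^[n] '' _ := himg ▸ (by norm_num : (1:ℝ) ∈ Set.Icc (0:ℝ) 1)
  set g : ℝ → ℝ := fun x => tent^[n] x - x with hg
  have hgc : Continuous g := (tent_continuous.iterate n).sub continuous_id
  have hsub := dyadic_subset n k hk
  have hga : g a ≤ 0 := by
    have : (0:ℝ) ≤ a := (hsub ha).1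
    simp only [hg, ha0]; linarith
  have hgb : 0 ≤ g b := by
    have : b ≤ 1 := (hsub hb).2
    simp only [hg, hb1]; linarith
  have h0 : (0:ℝ) ∈ Set.uIcc (g a) (g b) := Set.mem_uIcc.2 (Or.inl ⟨hga, hgb⟩)
  obtain ⟨p, hp, hp0⟩ := intermediate_value_uIcc (hgc.continuousOn) h0
  refine ⟨p, Set.uIcc_subset_Icc ha hb hp, ?_⟩
  simp only [hg] at hp0
  linarith [hp0]

lemma exists_small_n (ε : ℝ) (hε : 0 < ε) : ∃ n : ℕ, 0 < n ∧ (1:ℝ)/2^n < ε := by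
  obtain ⟨n, hn⟩ := exists_pow_lt_of_lt_one hε (by norm_num : (1:ℝ)/2 < 1)
  refine ⟨n + 1, Nat.succ_pos n, ?_⟩
  have h1 : ((1:ℝ)/2)^(n+1) ≤ (1/2)^n := by
    apply pow_le_pow_of_le_one <;> norm_num
  have h2 : (1:ℝ)/2^(n+1) = (1/2)^(n+1) := by
    rw [div_pow]; norm_num
  linarith


/-- the tent map is chaotic on `[0,1]`: it maps `[0,1]` onto
`[0,1]`, is continuous on `[0,1]`, is topologically transitive on `[0,1]`
(subspace topology), has a dense set of periodic points in `[0,1]`, and is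
sensitive to initial conditions on `[0,1]` (standard metric). -/
theorem stmt15 :
    Function.Surjective tentSub ∧ Continuous tentSub ∧
    (∀ U V : Set (Set.Icc (0 : ℝ) 1), IsOpen U → IsOpen V →
      U.Nonempty → V.Nonempty → ∃ n > 0, (tentSub^[n] '' U ∩ V).Nonempty) ∧
    Dense {x : Set.Icc (0 : ℝ) 1 | ∃ n > 0, tentSub^[n] x = x} ∧
    ∃ η > 0, ∀ x : Set.Icc (0 : ℝ) 1, ∀ ε > 0, ∃ z : Set.Icc (0 : ℝ) 1,
      dist x z < ε ∧ ∃ n : ℕ, dist (tentSub^[n] x) (tentSub^[n] z) > η := by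
  refine ⟨?_, ?_, ?_, ?_, ?_⟩
  · -- surjective
    rintro ⟨y, hy0, hy1⟩
    refine ⟨⟨y/2, ⟨by linarith, by linarith⟩⟩, ?_⟩
    apply Subtype.ext
    show tent (y/2) = y
    rw [tent, if_pos (by linarith)]
    ring
  · -- continuous
    exact (tent_continuous.comp continuous_subtype_val).subtype_mk _
  · -- transitive
    intro U V hU hV ⟨x, hxU⟩ ⟨v, hvV⟩
    obtain ⟨ε, hε, hball⟩ := Metric.isOpen_iff.1 hU x hxU
    obtain ⟨n, hn0, hnε⟩ := exists_small_n ε hε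
    obtain ⟨k, hk, hxk⟩ := dyadic_mem x.2 n
    have h2n : (0:ℝ) < 2^n := by positivity
    refine ⟨n, hn0, ?_⟩
    have hv1 : (v:ℝ) ∈ tent^[n] '' Set.Icc ((k:ℝ)/2^n) ((k+1)/2^n) := by
      rw [tent_iter_image n k hk]; exact v.2
    obtain ⟨p, hp, hpv⟩ := hv1
    have hp01 : p ∈ Set.Icc (0:ℝ) 1 := dyadic_subset n k hk hp
    refine ⟨v, ⟨⟨p, hp01⟩, ?_, ?_⟩, hvV⟩
    · apply hball
      rw [Metric.mem_ball, Subtype.dist_eq]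
      calc dist (p : ℝ) (x : ℝ) ≤ ((k:ℝ)+1)/2^n - (k:ℝ)/2^n := Real.dist_le_of_mem_Icc hp hxk
      _ = 1/2^n := by ring
      _ < ε := hnε
    · apply Subtype.ext
      rw [tentSub_val]
      exact hpv
  · -- dense periodic points
    rw [Metric.dense_iff]
    intro x ε hε
    obtain ⟨n, hn0, hnε⟩ := exists_small_n ε hε
    obtain ⟨k, hk, hxk⟩ := dyadic_mem x.2 n
    obtain ⟨p, hp, hpfix⟩ := tent_fixed n k hk
    have hp01 : p ∈ Set.Icc (0:ℝ) 1 := dyadic_subset n k hk hp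
    refine ⟨⟨p, hp01⟩, ?_, n, hn0, ?_⟩
    · rw [Metric.mem_ball, Subtype.dist_eq]
      calc dist (p:ℝ) (x:ℝ) ≤ ((k:ℝ)+1)/2^n - (k:ℝ)/2^n := Real.dist_le_of_mem_Icc hp hxk
      _ = 1/2^n := by ring
      _ < ε := hnε
    · apply Subtype.ext
      rw [tentSub_val]
      exact hpfix
  · -- sensitive
    refine ⟨1/3, by norm_num, ?_⟩
    intro x ε hε
    obtain ⟨n, hn0, hnε⟩ := exists_small_n ε hε
    obtain ⟨k, hk, hxk⟩ := dyadic_mem x.2 n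
    have himg := tent_iter_image n k hk
    by_cases hhalf : tent^[n] (x:ℝ) ≤ 1/2
    · obtain ⟨z, hz, hz1⟩ : (1:ℝ) ∈ tent^[n] '' _ := himg ▸ (by norm_num : (1:ℝ) ∈ Set.Icc (0:ℝ) 1)
      refine ⟨⟨z, dyadic_subset n k hk hz⟩, ?_, n, ?_⟩
      · rw [Subtype.dist_eq]
        calc dist (x:ℝ) z ≤ ((k:ℝ)+1)/2^n - (k:ℝ)/2^n := Real.dist_le_of_mem_Icc hxk hz
        _ = 1/2^n := by ring
        _ < ε := hnε
      · rw [Subtype.dist_eq, tentSub_val, tentSub_val, hz1, Real.dist_eq]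
        rw [abs_sub_comm, abs_of_nonneg (by linarith)]
        linarith
    · push_neg at hhalf
      obtain ⟨z, hz, hz0⟩ : (0:ℝ) ∈ tent^[n] '' _ := himg ▸ (by norm_num : (0:ℝ) ∈ Set.Icc (0:ℝ) 1)
      refine ⟨⟨z, dyadic_subset n k hk hz⟩, ?_, n, ?_⟩
      · rw [Subtype.dist_eq]
        calc dist (x:ℝ) z ≤ ((k:ℝ)+1)/2^n - (k:ℝ)/2^n := Real.dist_le_of_mem_Icc hxk hz
        _ = 1/2^n := by ring
        _ < ε := hnε
      · rw [Subtype.dist_eq, tentSub_val, tentSub_val, hz0, Real.dist_eq]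
        rw [abs_of_nonneg (by linarith)]
        linarith
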